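/- Suppose π : X → Y and π' : X' → Y' are factor maps of G-systems and there is a commutative diagram in which φ̄ : X → X' is an isomorphism of measure-preserving G-systems, φ : Y → Y' is a factor map, and π' ∘ φ̄ = φ ∘ π (i.e. π' is a downward extension of π). Then for every rate function U and every Følner sequence (F_n) for G, h_slow^{U,(F_n)}(X | π) ≤ h_slow^{U,(F_n)}(X' | π'). -/

import Mathlib

open MeasureTheory Filter Set Topology
open scoped ENNReal Classical

section SlowEntropyDefs

variable {G : Type*} [Group G]

/-- A measure-preserving action of a group `G` on a probability space. -/
structure IsMPSystem {X : Type*} [MeasurableSpace X] (T : G → X → X) (μ : Measure X) : Prop where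
  prob : IsProbabilityMeasure μ
  meas : ∀ g, Measurable (T g)
  mp : ∀ g, MeasurePreserving (T g) μ μ
  mul : ∀ g g' x, T (g * g') x = T g (T g' x)
  one : ∀ x, T 1 x = x

/-- A factor map between measure-preserving `G`-systems. -/
structure IsFactorMap {X Y : Type*} [MeasurableSpace X] [MeasurableSpace Y]
    (T : G → X → X) (μ : Measure X) (S : G → Y → Y) (ν : Measure Y) (π : X → Y) : Prop where
  meas : Measurable π
  map : μ.map π = ν
  equiv : ∀ g x, π (T g x) = S g (π x)

/-- An isomorphism of measure-preserving `G`-systems: a factor map with an a.e. two-sided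
inverse factor map. -/
def IsIsomorphism {X Y : Type*} [MeasurableSpace X] [MeasurableSpace Y]
    (T : G → X → X) (μ : Measure X) (S : G → Y → Y) (ν : Measure Y) (π : X → Y) : Prop :=
  IsFactorMap T μ S ν π ∧ ∃ ρ : Y → X, IsFactorMap S ν T μ ρ ∧
    (∀ᵐ x ∂μ, ρ (π x) = x) ∧ (∀ᵐ y ∂ν, π (ρ y) = y)

/-- `μy` is a disintegration of `μ` over the map `π : X → Y` (with `ν` the image of `μ`). -/
structure IsDisintegration {X Y : Type*} [MeasurableSpace X] [MeasurableSpace Y]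
    (μ : Measure X) (ν : Measure Y) (π : X → Y) (μy : Y → Measure X) : Prop where
  prob : ∀ y, IsProbabilityMeasure (μy y)
  meas : ∀ s : Set X, MeasurableSet s → Measurable fun y => μy y s
  eq : ∀ s : Set X, MeasurableSet s → μ s = ∫⁻ y, μy y s ∂ν
  supp : ∀ᵐ y ∂ν, μy y (π ⁻¹' {y}) = 1

/-- A (left) Følner sequence for `G`: a sequence of nonempty finite subsets `F n ⊆ G` with
`|gFₙ ∩ Fₙ| / |Fₙ| → 1` for every `g ∈ G`. -/
def IsFolner (F : ℕ → Finset G) : Prop :=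
  (∀ n, (F n).Nonempty) ∧ ∀ g : G,
    Tendsto (fun n => ((((F n).image fun h => g * h) ∩ F n).card : ℝ) / ((F n).card : ℝ))
      atTop (nhds 1)

/-- The normalized Hamming distance `d_{P,F}` between the `(P,F)`-names of two points. -/
noncomputable def hamDist {X : Type*} (T : G → X → X) {r : ℕ} (P : X → Fin r)
    (F : Finset G) (x x' : X) : ℝ :=
  ((F.filter fun f => P (T f x) ≠ P (T f x')).card : ℝ) / (F.card : ℝ)

/-- The set `E` has `d_{P,F}`-diameter at most `ε`. -/
def diamLE {X : Type*} (T : G → X → X) {r : ℕ} (P : X → Fin r) (F : Finset G)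
    (E : Set X) (ε : ℝ) : Prop :=
  ∀ x ∈ E, ∀ x' ∈ E, hamDist T P F x x' ≤ ε

/-- The Hamming `ε`-covering number `cov(λ, P, F, ε)`: the smallest `M` such that there are
sets `E₁, …, E_M` of `d_{P,F}`-diameter at most `ε` whose union has `λ`-measure `≥ 1 - ε`. -/
noncomputable def hamCov {X : Type*} [MeasurableSpace X] (T : G → X → X) (lam : Measure X)
    {r : ℕ} (P : X → Fin r) (F : Finset G) (ε : ℝ) : ℕ :=
  sInf {M : ℕ | ∃ E : Fin M → Set X, (∀ i, diamLE T P F (E i) ε) ∧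
    ENNReal.ofReal (1 - ε) ≤ lam (⋃ i, E i)}

/-- The relative Hamming `ε`-covering number `cov(μ, P, F, ε | π)`, defined through the
disintegration `μy` of `μ` over `π` and the image measure `ν`: the smallest `M` such that
there exists `S ⊆ Y` with `ν S ≥ 1 - ε` and `cov(μ_y, P, F, ε) ≤ M` for every `y ∈ S`. -/
noncomputable def hamCovRel {X Y : Type*} [MeasurableSpace X] [MeasurableSpace Y]
    (T : G → X → X) (μy : Y → Measure X) (ν : Measure Y) {r : ℕ} (P : X → Fin r)
    (F : Finset G) (ε : ℝ) : ℕ :=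
  sInf {M : ℕ | ∃ S : Set Y, MeasurableSet S ∧ ENNReal.ofReal (1 - ε) ≤ ν S ∧
    ∀ y ∈ S, hamCov T (μy y) P F ε ≤ M}

/-- A rate function: an increasing positive function on `ℕ` tending to infinity. -/
def IsRateFunction (U : ℕ → ℝ) : Prop :=
  (∀ n, 0 < U n) ∧ Monotone U ∧ Tendsto U atTop atTop

/-- Relative slow entropy of a partition:
`sup_{ε>0} limsup_n cov(μ, P, F_n, ε | π) / U(|F_n|)`, valued in `[0,∞]`. -/
noncomputable def slowEntropyPartRel {X Y : Type*} [MeasurableSpace X] [MeasurableSpace Y]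
    (T : G → X → X) (μy : Y → Measure X) (ν : Measure Y) {r : ℕ} (P : X → Fin r)
    (U : ℕ → ℝ) (F : ℕ → Finset G) : ℝ≥0∞ :=
  ⨆ ε ∈ Ioi (0 : ℝ),
    Filter.limsup
      (fun n => ENNReal.ofReal ((hamCovRel T μy ν P (F n) ε : ℝ) / U (F n).card)) atTop

/-- Relative slow entropy: the supremum over all finite measurable partitions. -/
noncomputable def slowEntropyRel {X Y : Type*} [MeasurableSpace X] [MeasurableSpace Y]
    (T : G → X → X) (μy : Y → Measure X) (ν : Measure Y)
    (U : ℕ → ℝ) (F : ℕ → Finset G) : ℝ≥0∞ :=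
  ⨆ (r : ℕ) (P : X → Fin r) (_ : Measurable P), slowEntropyPartRel T μy ν P U F

/-- The partition distance `dist_λ(P, Q) = λ{x : P(x) ≠ Q(x)}` between two labeled
partitions indexed by the same set. -/
noncomputable def partDist {Z : Type*} [MeasurableSpace Z] (lam : Measure Z)
    {ι : Type*} (P Q : Z → ι) : ℝ≥0∞ :=
  lam {z | P z ≠ Q z}

/-- Ergodicity of a measure-preserving `G`-action. -/
def IsErgodicAction {X : Type*} [MeasurableSpace X] (T : G → X → X) (μ : Measure X) : Prop :=
  ∀ s : Set X, MeasurableSet s → (∀ g, T g ⁻¹' s = s) → μ s = 0 ∨ μ s = 1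

end SlowEntropyDefs


section AuxLemmas

variable {G : Type*} [Group G]

lemma diamLE_empty {X : Type*} (T : G → X → X) {r : ℕ} (P : X → Fin r) (F : Finset G)
    (ε : ℝ) : diamLE T P F (∅ : Set X) ε := fun x hx => absurd hx (notMem_empty x)

lemma hamDist_eq_of_names {X X' : Type*} (T : G → X → X) (T' : G → X' → X') {r : ℕ}
    (P : X → Fin r) (P' : X' → Fin r) (F : Finset G) {x z : X} {x' z' : X'}
    (hx : ∀ f ∈ F, P (T f x) = P' (T' f x')) (hz : ∀ f ∈ F, P (T f z) = P' (T' f z')) :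
    hamDist T P F x z = hamDist T' P' F x' z' := by
  unfold hamDist
  have h : (F.filter fun f => P (T f x) ≠ P (T f z)) =
      F.filter fun f => P' (T' f x') ≠ P' (T' f z') :=
    Finset.filter_congr fun f hf => by rw [hx f hf, hz f hf]
  rw [h]

lemma hamDist_self_names {X : Type*} (T : G → X → X) {r : ℕ} (P : X → Fin r) (F : Finset G)
    {x z : X} (h : ∀ f ∈ F, P (T f x) = P (T f z)) : hamDist T P F x z = 0 := by
  unfold hamDist
  rw [Finset.filter_false_of_mem (fun f hf => by simp [h f hf]), Finset.card_empty]
  simp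

lemma exists_name_cover {X : Type*} (T : G → X → X) {r : ℕ} (P : X → Fin r) (F : Finset G)
    {ε : ℝ} (hε : 0 ≤ ε) :
    ∃ K : ℕ, ∃ E : Fin K → Set X, (∀ i, diamLE T P F (E i) ε) ∧ (⋃ i, E i) = Set.univ := by
  classical
  let W := (↥F) → Fin r
  let e := Fintype.equivFin W
  refine ⟨Fintype.card W, fun i => {x | (fun f : ↥F => P (T ↑f x)) = e.symm i}, ?_, ?_⟩
  · intro i x hx z hz
    have h : ∀ f ∈ F, P (T f x) = P (T f z) := by
      intro f hf
      have hx' : (fun f : ↥F => P (T ↑f x)) = e.symm i := hx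
      have hz' : (fun f : ↥F => P (T ↑f z)) = e.symm i := hz
      calc P (T f x) = e.symm i ⟨f, hf⟩ := congrFun hx' ⟨f, hf⟩
        _ = P (T f z) := (congrFun hz' ⟨f, hf⟩).symm
    rw [hamDist_self_names T P F h]; exact hε
  · ext x
    simp only [Set.mem_iUnion, Set.mem_univ, iff_true]
    exact ⟨e (fun f : ↥F => P (T ↑f x)), by simp [Set.mem_setOf_eq]⟩

lemma hamCov_le_of_cover {X : Type*} [MeasurableSpace X] {T : G → X → X} {lam : Measure X}
    {r : ℕ} {P : X → Fin r} {F : Finset G} {ε : ℝ} {M : ℕ}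
    (E : Fin M → Set X) (h1 : ∀ i, diamLE T P F (E i) ε)
    (h2 : ENNReal.ofReal (1 - ε) ≤ lam (⋃ i, E i)) :
    hamCov T lam P F ε ≤ M := Nat.sInf_le ⟨E, h1, h2⟩

lemma exists_cover_of_hamCov_le {X : Type*} [MeasurableSpace X] {T : G → X → X}
    {lam : Measure X} [IsProbabilityMeasure lam]
    {r : ℕ} {P : X → Fin r} {F : Finset G} {ε : ℝ} (hε : 0 ≤ ε) {M : ℕ}
    (h : hamCov T lam P F ε ≤ M) :
    ∃ E : Fin M → Set X, (∀ i, diamLE T P F (E i) ε) ∧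
      ENNReal.ofReal (1 - ε) ≤ lam (⋃ i, E i) := by
  classical
  obtain ⟨K, E0, hE0d, hE0u⟩ := exists_name_cover T P F hε
  have hne : {M : ℕ | ∃ E : Fin M → Set X, (∀ i, diamLE T P F (E i) ε) ∧
      ENNReal.ofReal (1 - ε) ≤ lam (⋃ i, E i)}.Nonempty := by
    refine ⟨K, E0, hE0d, ?_⟩
    rw [hE0u, measure_univ]
    exact ENNReal.ofReal_le_one.mpr (by linarith)
  have hmem := Nat.sInf_mem hne
  obtain ⟨E1, hd, hu⟩ := hmem
  have h' : sInf {M : ℕ | ∃ E : Fin M → Set X, (∀ i, diamLE T P F (E i) ε) ∧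
      ENNReal.ofReal (1 - ε) ≤ lam (⋃ i, E i)} ≤ M := h
  refine ⟨fun i => if hi : (i : ℕ) < sInf {M : ℕ | ∃ E : Fin M → Set X,
      (∀ i, diamLE T P F (E i) ε) ∧ ENNReal.ofReal (1 - ε) ≤ lam (⋃ i, E i)}
      then E1 ⟨i, hi⟩ else ∅, ?_, ?_⟩
  · intro i; dsimp only; split
    · exact hd _
    · exact diamLE_empty T P F ε
  · refine le_trans hu (measure_mono ?_)
    intro x hx
    rw [Set.mem_iUnion] at hx ⊢
    obtain ⟨j, hj⟩ := hx
    refine ⟨⟨(j : ℕ), lt_of_lt_of_le j.2 h'⟩, ?_⟩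
    dsimp only
    rw [dif_pos j.2]
    exact hj

lemma disint_setLIntegral {X Y : Type*} [MeasurableSpace X] [MeasurableSpace Y]
    {μ : Measure X} {ν : Measure Y} {π : X → Y} {μy : Y → Measure X}
    (hπ : Measurable π) (hdis : IsDisintegration μ ν π μy)
    (hsing : ∀ y : Y, MeasurableSet ({y} : Set Y))
    {B : Set X} (hB : MeasurableSet B) {E : Set Y} (hE : MeasurableSet E) :
    ∫⁻ y in E, μy y B ∂ν = μ (B ∩ π ⁻¹' E) := by
  rw [hdis.eq _ (hB.inter (hπ hE)), ← lintegral_indicator hE]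
  apply lintegral_congr_ae
  filter_upwards [hdis.supp] with y hy
  have hcompl : μy y ((π ⁻¹' {y})ᶜ) = 0 := by
    haveI := hdis.prob y
    rw [measure_compl (hπ (hsing y)) (measure_ne_top _ _), hy, measure_univ, tsub_self]
  by_cases hyE : y ∈ E
  · rw [Set.indicator_of_mem hyE]
    refine le_antisymm ?_ (measure_mono Set.inter_subset_left)
    calc μy y B = μy y (B ∩ π ⁻¹' {y}) := (measure_inter_conull hcompl).symm
      _ ≤ μy y (B ∩ π ⁻¹' E) := measure_mono (Set.inter_subset_inter_right _
          (fun u hu => by simp only [Set.mem_preimage, Set.mem_singleton_iff] at hu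
                          simp [Set.mem_preimage, hu, hyE]))
  · rw [Set.indicator_of_notMem hyE]
    refine (le_zero_iff.mp ?_).symm
    calc μy y (B ∩ π ⁻¹' E) ≤ μy y ((π ⁻¹' {y})ᶜ) := measure_mono ?_
      _ = 0 := hcompl
    intro u hu
    simp only [Set.mem_inter_iff, Set.mem_preimage] at hu
    simp only [Set.mem_compl_iff, Set.mem_preimage, Set.mem_singleton_iff]
    intro heq
    exact hyE (heq ▸ hu.2)

end AuxLemmas

set_option maxHeartbeats 1000000 in
lemma key_cov_le {G X Y X' Y' : Type*} [Group G] [Countable G]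
    [MeasurableSpace X] [MeasurableSpace Y] [MeasurableSpace X'] [MeasurableSpace Y']
    {T : G → X → X} {μ : Measure X} {ν : Measure Y}
    {T' : G → X' → X'} {μ' : Measure X'} {ν' : Measure Y'}
    [IsProbabilityMeasure ν] [IsProbabilityMeasure ν']
    {π : X → Y} {π' : X' → Y'}
    (hπmeas : Measurable π) (hπ'meas : Measurable π')
    (hsingY : ∀ y : Y, MeasurableSet ({y} : Set Y))
    (hsingY' : ∀ y : Y', MeasurableSet ({y} : Set Y'))
    {φbar : X → X'} {φ : Y → Y'}
    (hφbarmeas : Measurable φbar) (hφbarmap : μ.map φbar = μ')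
    (hφbarequiv : ∀ g x, φbar (T g x) = T' g (φbar x))
    {ρ : X' → X} (hρmeas : Measurable ρ)
    (hφmeas : Measurable φ) (hφmap : ν.map φ = ν')
    (hcomm : ∀ x, π' (φbar x) = φ (π x))
    (hT'meas : ∀ g, Measurable (T' g))
    {μy : Y → Measure X} (hdis : IsDisintegration μ ν π μy)
    {μy' : Y' → Measure X'} (hdis' : IsDisintegration μ' ν' π' μy')
    {N : Set X} (hNmeas : MeasurableSet N) (hNnull : μ N = 0)
    (hN : ∀ x ∉ N, ∀ g : G, ρ (φbar (T g x)) = T g x)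
    {r : ℕ} {P : X → Fin r} (hP : Measurable P)
    (F : Finset G) {ε ε' : ℝ} (hε0 : 0 < ε) (hε1 : ε ≤ 1) (hε' : ε' = ε ^ 2 / 4) :
    hamCovRel T μy ν P F ε ≤ hamCovRel T' μy' ν' (P ∘ ρ) F ε' := by
  classical
  have hε'0 : 0 < ε' := by rw [hε']; positivity
  have hε'half : ε' ≤ ε / 2 := by rw [hε']; nlinarith
  set M := hamCovRel T' μy' ν' (P ∘ ρ) F ε' with hM
  -- the name map on X'
  set W := (↥F) → Fin r with hW
  set nm : X' → W := fun x' f => P (ρ (T' ↑f x')) with hnm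
  have hnm_meas : Measurable nm :=
    measurable_pi_lambda _ fun f => (hP.comp hρmeas).comp (hT'meas ↑f)
  have hWmeas : ∀ s : Set W, MeasurableSet s := by
    intro s
    have h1 : ∀ w : W, MeasurableSet ({w} : Set W) := by
      intro w
      have : ({w} : Set W) = ⋂ f, (fun v : W => v f) ⁻¹' {w f} := by
        ext v
        simp only [Set.mem_singleton_iff, Set.mem_iInter, Set.mem_preimage]
        exact funext_iff
      rw [this]
      exact MeasurableSet.iInter fun f => measurable_pi_apply f (measurableSet_singleton _)
    have h2 : s = ⋃ w ∈ s, {w} := by simp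
    rw [h2]
    exact MeasurableSet.biUnion s.to_countable fun w _ => h1 w
  -- candidate covers by unions of name cells
  set A' : (Fin M → Set W) → Set X' := fun c => ⋃ i, nm ⁻¹' (c i) with hA'
  have hA'meas : ∀ c, MeasurableSet (A' c) :=
    fun c => MeasurableSet.iUnion fun i => hnm_meas (hWmeas (c i))
  set valid : (Fin M → Set W) → Prop :=
    fun c => ∀ i, diamLE T' (P ∘ ρ) F (nm ⁻¹' (c i)) ε' with hvalid
  -- enumeration of candidates
  haveI : Finite (Fin M → Set W) := inferInstance
  obtain ⟨e, he⟩ := exists_surjective_nat (Fin M → Set W)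
  -- the witness on the Y' side
  have hrelne : {K : ℕ | ∃ S : Set Y', MeasurableSet S ∧ ENNReal.ofReal (1 - ε') ≤ ν' S ∧
      ∀ y ∈ S, hamCov T' (μy' y) (P ∘ ρ) F ε' ≤ K}.Nonempty := by
    obtain ⟨K, E0, hE0d, hE0u⟩ := exists_name_cover T' (P ∘ ρ) F hε'0.le
    refine ⟨K, Set.univ, MeasurableSet.univ, by
      rw [measure_univ]; exact ENNReal.ofReal_le_one.mpr (by linarith), fun y _ => ?_⟩
    refine hamCov_le_of_cover E0 hE0d ?_
    haveI := hdis'.prob y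
    rw [hE0u, measure_univ]
    exact ENNReal.ofReal_le_one.mpr (by linarith)
  obtain ⟨S', hS'meas, hS'ν, hS'cov⟩ := Nat.sInf_mem hrelne
  -- canonical name covers on the Y' side
  set S'seq : ℕ → Set Y' := fun n => if valid (e n) then
      {y' | ENNReal.ofReal (1 - ε') ≤ μy' y' (A' (e n))} else ∅ with hS'seq
  have hS'seqmeas : ∀ n, MeasurableSet (S'seq n) := by
    intro n
    rw [hS'seq]
    dsimp only
    split
    · exact (hdis'.meas _ (hA'meas (e n))) measurableSet_Ici
    · exact MeasurableSet.empty
  have hS'sub : S' ⊆ ⋃ n, S'seq n := by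
    intro y' hy'
    haveI := hdis'.prob y'
    obtain ⟨E, hEd, hEu⟩ := exists_cover_of_hamCov_le hε'0.le (hS'cov y' hy')
    set c : Fin M → Set W := fun i => nm '' (E i) with hc
    have hcvalid : valid c := by
      intro i x hx z hz
      obtain ⟨a, ha, hax⟩ := hx
      obtain ⟨b, hb, hbz⟩ := hz
      have h1 : ∀ f ∈ F, (P ∘ ρ) (T' f a) = (P ∘ ρ) (T' f x) := by
        intro f hf
        exact (congrFun hax ⟨f, hf⟩ : _)
      have h2 : ∀ f ∈ F, (P ∘ ρ) (T' f b) = (P ∘ ρ) (T' f z) := by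
        intro f hf
        exact (congrFun hbz ⟨f, hf⟩ : _)
      rw [← hamDist_eq_of_names T' T' (P ∘ ρ) (P ∘ ρ) F h1 h2]
      exact hEd i a ha b hb
    obtain ⟨n, hn⟩ := he c
    refine Set.mem_iUnion.mpr ⟨n, ?_⟩
    rw [hS'seq]
    dsimp only
    rw [hn, if_pos hcvalid]
    refine le_trans hEu (measure_mono ?_)
    refine Set.iUnion_mono fun i => ?_
    exact fun x hx => Set.mem_preimage.mpr ⟨x, hx, rfl⟩
  -- disjointify
  set D' : ℕ → Set Y' := disjointed S'seq with hD'
  have hD'meas : ∀ n, MeasurableSet (D' n) := MeasurableSet.disjointed hS'seqmeas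
  have hD'sub : ∀ n, D' n ⊆ S'seq n := disjointed_subset S'seq
  -- Y-side good sets
  set Q : ℕ → Set Y := fun n =>
      {y | ENNReal.ofReal (1 - ε) ≤ μy y (φbar ⁻¹' (A' (e n)))} with hQ
  have hQmeas : ∀ n, MeasurableSet (Q n) :=
    fun n => (hdis.meas _ (hφbarmeas (hA'meas (e n)))) measurableSet_Ici
  set Z : Set Y := {y | μy y N = 0} with hZ
  have hZmeas : MeasurableSet Z := (hdis.meas _ hNmeas) (measurableSet_singleton 0)
  have hZconull : ν Zᶜ = 0 := by
    have h0 : ∫⁻ y, μy y N ∂ν = 0 := (hdis.eq N hNmeas).symm.trans hNnull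
    have hae : ∀ᵐ y ∂ν, μy y N = 0 := (lintegral_eq_zero_iff (hdis.meas N hNmeas)).mp h0
    rw [ae_iff] at hae
    simpa [hZ, Set.compl_setOf] using hae
  -- the star identity
  have star : ∀ (A'' : Set X') (D'' : Set Y'), MeasurableSet A'' → MeasurableSet D'' →
      ∫⁻ y in φ ⁻¹' D'', μy y (φbar ⁻¹' A'') ∂ν = ∫⁻ y' in D'', μy' y' A'' ∂ν' := by
    intro A'' D'' hA hD
    rw [disint_setLIntegral hπmeas hdis hsingY (hφbarmeas hA) (hφmeas hD),
      disint_setLIntegral hπ'meas hdis' hsingY' hA hD]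
    have hset : φbar ⁻¹' A'' ∩ π ⁻¹' (φ ⁻¹' D'') = φbar ⁻¹' (A'' ∩ π' ⁻¹' D'') := by
      ext x
      simp only [Set.mem_inter_iff, Set.mem_preimage, hcomm x]
    rw [hset, ← hφbarmap, Measure.map_apply hφbarmeas (hA.inter (hπ'meas hD))]
  have hφpre : ∀ D'' : Set Y', MeasurableSet D'' → ν (φ ⁻¹' D'') = ν' D'' := by
    intro D'' hD
    rw [← hφmap, Measure.map_apply hφmeas hD]
  -- Markov inequality per block
  have markov : ∀ n, ν (φ ⁻¹' D' n \ Q n) ≤ ENNReal.ofReal (ε / 2) * ν (φ ⁻¹' D' n) := by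
    intro n
    by_cases hv : valid (e n)
    · set A := A' (e n) with hA
      set D := φ ⁻¹' D' n with hD
      have hDmeas : MeasurableSet D := hφmeas (hD'meas n)
      have h1 : ENNReal.ofReal (1 - ε') * ν D ≤ ∫⁻ y in D, μy y (φbar ⁻¹' A) ∂ν := by
        calc ENNReal.ofReal (1 - ε') * ν D
            = ENNReal.ofReal (1 - ε') * ν' (D' n) := by rw [hD, hφpre (D' n) (hD'meas n)]
          _ = ∫⁻ _ in D' n, ENNReal.ofReal (1 - ε') ∂ν' := (setLIntegral_const _ _).symm
          _ ≤ ∫⁻ y' in D' n, μy' y' A ∂ν' := by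
              refine setLIntegral_mono (hdis'.meas _ (hA'meas (e n))) ?_
              intro y' hy'
              have hmem := hD'sub n hy'
              rw [hS'seq] at hmem; dsimp only at hmem; rw [if_pos hv] at hmem
              exact hmem
          _ = ∫⁻ y in D, μy y (φbar ⁻¹' A) ∂ν := by
              rw [hD, star A (D' n) (hA'meas (e n)) (hD'meas n)]
      have hfle1 : ∀ y, μy y (φbar ⁻¹' A) ≤ 1 := by
        intro y
        haveI := hdis.prob y
        exact prob_le_one
      have h2 : ∫⁻ y in D, μy y (φbar ⁻¹' A) ∂ν
          ≤ ν (D ∩ Q n) + ENNReal.ofReal (1 - ε) * ν (D \ Q n) := by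
        have hDu : D = (D ∩ Q n) ∪ (D \ Q n) := (Set.inter_union_diff D (Q n)).symm
        have hdisj : Disjoint (D ∩ Q n) (D \ Q n) :=
          Set.disjoint_sdiff_right.mono_left Set.inter_subset_right
        calc ∫⁻ y in D, μy y (φbar ⁻¹' A) ∂ν
            = ∫⁻ y in (D ∩ Q n) ∪ (D \ Q n), μy y (φbar ⁻¹' A) ∂ν := by rw [← hDu]
          _ = (∫⁻ y in D ∩ Q n, μy y (φbar ⁻¹' A) ∂ν)
              + ∫⁻ y in D \ Q n, μy y (φbar ⁻¹' A) ∂ν :=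
              lintegral_union (hDmeas.diff (hQmeas n)) hdisj
          _ ≤ (∫⁻ _ in D ∩ Q n, (1 : ℝ≥0∞) ∂ν)
              + ∫⁻ _ in D \ Q n, ENNReal.ofReal (1 - ε) ∂ν := by
              refine add_le_add ?_ ?_
              · exact setLIntegral_mono measurable_const fun y _ => hfle1 y
              · refine setLIntegral_mono measurable_const ?_
                intro y hy
                have : ¬ (ENNReal.ofReal (1 - ε) ≤ μy y (φbar ⁻¹' A)) := hy.2
                exact (not_le.mp this).le
          _ = ν (D ∩ Q n) + ENNReal.ofReal (1 - ε) * ν (D \ Q n) := by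
              rw [setLIntegral_const, setLIntegral_const, one_mul]
      set a := ν (D ∩ Q n) with ha
      set b := ν (D \ Q n) with hb
      have hsplit : a + b = ν D := measure_inter_add_diff D (hQmeas n)
      have hafin : a ≠ ∞ := measure_ne_top ν _
      have hbfin : b ≠ ∞ := measure_ne_top ν _
      have hcomb : ENNReal.ofReal (1 - ε') * (a + b) ≤ a + ENNReal.ofReal (1 - ε) * b := by
        rw [hsplit]
        exact le_trans h1 h2
      set aR := a.toReal with haR
      set bR := b.toReal with hbR
      have haR0 : 0 ≤ aR := ENNReal.toReal_nonneg
      have hbR0 : 0 ≤ bR := ENNReal.toReal_nonneg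
      have haeq : a = ENNReal.ofReal aR := (ENNReal.ofReal_toReal hafin).symm
      have hbeq : b = ENNReal.ofReal bR := (ENNReal.ofReal_toReal hbfin).symm
      rw [haeq, hbeq, ← ENNReal.ofReal_add haR0 hbR0, ← ENNReal.ofReal_mul (by linarith),
        ← ENNReal.ofReal_mul (by linarith), ← ENNReal.ofReal_add haR0 (by nlinarith)] at hcomb
      have hR : (1 - ε') * (aR + bR) ≤ aR + (1 - ε) * bR :=
        (ENNReal.ofReal_le_ofReal_iff (by nlinarith)).mp hcomb
      have h5 : ε / 2 * bR ≤ ε ^ 2 / 4 * aR := by nlinarith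
      have h6 : bR ≤ ε / 2 * aR := by nlinarith [mul_le_mul_of_nonneg_left h5 (le_of_lt (by positivity : (0:ℝ) < 2 / ε))]
      have h7 : bR ≤ ε / 2 * (aR + bR) := by nlinarith
      calc b = ENNReal.ofReal bR := hbeq
        _ ≤ ENNReal.ofReal (ε / 2 * (aR + bR)) := ENNReal.ofReal_le_ofReal h7
        _ = ENNReal.ofReal (ε / 2) * ENNReal.ofReal (aR + bR) :=
            ENNReal.ofReal_mul (by linarith)
        _ = ENNReal.ofReal (ε / 2) * ν D := by
            rw [ENNReal.ofReal_add haR0 hbR0, ← haeq, ← hbeq, hsplit]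
    · have hempty : S'seq n = ∅ := by rw [hS'seq]; dsimp only; rw [if_neg hv]
      have h0 : ν (φ ⁻¹' D' n \ Q n) = 0 := by
        refine measure_mono_null (fun y hy => ?_) measure_empty
        have := hD'sub n hy.1
        rw [hempty] at this
        exact this
      rw [h0]
      exact zero_le
  -- total bad measure
  set S₀ : Set Y := ⋃ n, (φ ⁻¹' D' n ∩ Q n) with hS₀
  have hS₀meas : MeasurableSet S₀ :=
    MeasurableSet.iUnion fun n => (hφmeas (hD'meas n)).inter (hQmeas n)
  have hUbad : ν (φ ⁻¹' (⋃ n, D' n) \ S₀) ≤ ENNReal.ofReal (ε / 2) := by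
    have hsub : φ ⁻¹' (⋃ n, D' n) \ S₀ ⊆ ⋃ n, (φ ⁻¹' D' n \ Q n) := by
      rintro y ⟨hy1, hy2⟩
      rw [Set.preimage_iUnion, Set.mem_iUnion] at hy1
      obtain ⟨n, hn⟩ := hy1
      exact Set.mem_iUnion.mpr ⟨n, hn, fun hq => hy2 (Set.mem_iUnion.mpr ⟨n, hn, hq⟩)⟩
    calc ν (φ ⁻¹' (⋃ n, D' n) \ S₀) ≤ ν (⋃ n, (φ ⁻¹' D' n \ Q n)) := measure_mono hsub
      _ ≤ ∑' n, ν (φ ⁻¹' D' n \ Q n) := measure_iUnion_le _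
      _ ≤ ∑' n, ENNReal.ofReal (ε / 2) * ν (φ ⁻¹' D' n) := ENNReal.tsum_le_tsum markov
      _ = ENNReal.ofReal (ε / 2) * ∑' n, ν (φ ⁻¹' D' n) := ENNReal.tsum_mul_left
      _ = ENNReal.ofReal (ε / 2) * ∑' n, ν' (D' n) := by
          congr 1; exact tsum_congr fun n => hφpre (D' n) (hD'meas n)
      _ = ENNReal.ofReal (ε / 2) * ν' (⋃ n, D' n) := by
          rw [measure_iUnion (disjoint_disjointed S'seq) hD'meas]
      _ ≤ ENNReal.ofReal (ε / 2) * 1 := mul_le_mul_right prob_le_one _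
      _ = ENNReal.ofReal (ε / 2) := mul_one _
  -- measure of the good set
  have hS₀ν : ENNReal.ofReal (1 - ε) ≤ ν S₀ := by
    have hU1 : ENNReal.ofReal (1 - ε') ≤ ν (φ ⁻¹' (⋃ n, D' n)) := by
      rw [hφpre _ (MeasurableSet.iUnion hD'meas), hD', iUnion_disjointed]
      exact le_trans hS'ν (measure_mono hS'sub)
    have hU2 : ν (φ ⁻¹' (⋃ n, D' n)) ≤ ν S₀ + ENNReal.ofReal (ε / 2) := by
      calc ν (φ ⁻¹' (⋃ n, D' n))
          = ν (φ ⁻¹' (⋃ n, D' n) ∩ S₀) + ν (φ ⁻¹' (⋃ n, D' n) \ S₀) :=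
            (measure_inter_add_diff _ hS₀meas).symm
        _ ≤ ν S₀ + ENNReal.ofReal (ε / 2) :=
            add_le_add (measure_mono Set.inter_subset_right) hUbad
    have h3 : ENNReal.ofReal (1 - ε) + ENNReal.ofReal (ε / 2) ≤ ν S₀ + ENNReal.ofReal (ε / 2) := by
      calc ENNReal.ofReal (1 - ε) + ENNReal.ofReal (ε / 2)
          = ENNReal.ofReal (1 - ε + ε / 2) := (ENNReal.ofReal_add (by linarith) (by linarith)).symm
        _ ≤ ENNReal.ofReal (1 - ε') := ENNReal.ofReal_le_ofReal (by linarith)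
        _ ≤ ν (φ ⁻¹' (⋃ n, D' n)) := hU1
        _ ≤ ν S₀ + ENNReal.ofReal (ε / 2) := hU2
    exact (ENNReal.add_le_add_iff_right ENNReal.ofReal_ne_top).mp h3
  -- the final witness set
  set Sfin : Set Y := S₀ ∩ Z with hSfin
  have hSfinmeas : MeasurableSet Sfin := hS₀meas.inter hZmeas
  have hSfinν : ENNReal.ofReal (1 - ε) ≤ ν Sfin := by
    rw [hSfin, measure_inter_conull hZconull]
    exact hS₀ν
  -- covering bound for each y in the witness set
  have hcovy : ∀ y ∈ Sfin, hamCov T (μy y) P F ε ≤ M := by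
    intro y hy
    obtain ⟨hyS₀, hyZ⟩ := hy
    rw [hS₀, Set.mem_iUnion] at hyS₀
    obtain ⟨n, hyD, hyQ⟩ := hyS₀
    have hv : valid (e n) := by
      by_contra hv
      have hempty : S'seq n = ∅ := by rw [hS'seq]; dsimp only; rw [if_neg hv]
      exact absurd (hempty ▸ hD'sub n hyD) (Set.notMem_empty _)
    refine hamCov_le_of_cover (fun i => φbar ⁻¹' (nm ⁻¹' (e n i)) \ N) ?_ ?_
    · intro i x hx z hz
      have hnames : ∀ u : X, u ∉ N → ∀ f ∈ F, P (T f u) = (P ∘ ρ) (T' f (φbar u)) := by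
        intro u hu f _
        show P (T f u) = P (ρ (T' f (φbar u)))
        rw [← hφbarequiv f u, hN u hu f]
      have heq : hamDist T P F x z = hamDist T' (P ∘ ρ) F (φbar x) (φbar z) :=
        hamDist_eq_of_names T T' P (P ∘ ρ) F (hnames x hx.2) (hnames z hz.2)
      rw [heq]
      exact le_trans (hv i (φbar x) hx.1 (φbar z) hz.1) (by linarith)
    · have hunion : (⋃ i, (φbar ⁻¹' (nm ⁻¹' (e n i)) \ N)) = φbar ⁻¹' (A' (e n)) \ N := by
        rw [hA']; dsimp only; rw [Set.preimage_iUnion, Set.iUnion_diff]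
      rw [hunion, measure_diff_null hyZ]
      exact hyQ
  exact Nat.sInf_le ⟨Sfin, hSfinmeas, hSfinν, hcovy⟩

theorem relative_slow_entropy_monotone_under_more_conditioning
    {G X Y X' Y' : Type*} [Group G] [Countable G]
    [MeasurableSpace X] [MeasurableSpace Y] [MeasurableSpace X'] [MeasurableSpace Y']
    [StandardBorelSpace X] [StandardBorelSpace Y] [StandardBorelSpace X'] [StandardBorelSpace Y']
    (T : G → X → X) (μ : Measure X) (S : G → Y → Y) (ν : Measure Y)
    (T' : G → X' → X') (μ' : Measure X') (S' : G → Y' → Y') (ν' : Measure Y')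
    (hX : IsMPSystem T μ) (hY : IsMPSystem S ν) (hX' : IsMPSystem T' μ') (hY' : IsMPSystem S' ν')
    (π : X → Y) (π' : X' → Y')
    (hπ : IsFactorMap T μ S ν π) (hπ' : IsFactorMap T' μ' S' ν' π')
    (φbar : X → X') (φ : Y → Y')
    (hφbar : IsIsomorphism T μ T' μ' φbar) (hφ : IsFactorMap S ν S' ν' φ)
    (hcomm : ∀ x, π' (φbar x) = φ (π x))
    (μy : Y → Measure X) (hdis : IsDisintegration μ ν π μy)
    (μy' : Y' → Measure X') (hdis' : IsDisintegration μ' ν' π' μy')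
    (U : ℕ → ℝ) (hU : IsRateFunction U) (F : ℕ → Finset G) (hF : IsFolner F) :
    slowEntropyRel T μy ν U F ≤ slowEntropyRel T' μy' ν' U F := by
  classical
  haveI := hY.prob
  haveI := hY'.prob
  obtain ⟨hφbarF, ρ, hρF, hae, -⟩ := hφbar
  -- the bad null set
  obtain ⟨emb, hemb⟩ := exists_measurableEmbedding_real X
  set N₀ : Set X := {x | ¬ ρ (φbar x) = x} with hN₀
  have hN₀meas : MeasurableSet N₀ := by
    have h1 : MeasurableSet {x : X | emb (ρ (φbar x)) = emb x} :=
      measurableSet_eq_fun (hemb.measurable.comp (hρF.meas.comp hφbarF.meas)) hemb.measurable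
    have hseteq : {x : X | ρ (φbar x) = x} = {x : X | emb (ρ (φbar x)) = emb x} := by
      ext x
      exact ⟨fun h => by rw [Set.mem_setOf_eq] at h ⊢; rw [h], fun h => hemb.injective h⟩
    have h2 : MeasurableSet {x : X | ρ (φbar x) = x} := by rw [hseteq]; exact h1
    have h3 : N₀ = {x : X | ρ (φbar x) = x}ᶜ := by rw [hN₀, Set.compl_setOf]
    rw [h3]
    exact h2.compl
  have hN₀null : μ N₀ = 0 := by rw [hN₀]; exact ae_iff.mp hae
  set N : Set X := ⋃ g : G, T g ⁻¹' N₀ with hNdef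
  have hNmeas : MeasurableSet N := MeasurableSet.iUnion fun g => hX.meas g hN₀meas
  have hNnull : μ N = 0 := measure_iUnion_null fun g =>
    ((hX.mp g).measure_preimage hN₀meas.nullMeasurableSet).trans hN₀null
  have hN : ∀ x ∉ N, ∀ g : G, ρ (φbar (T g x)) = T g x := by
    intro x hx g
    by_contra h
    exact hx (Set.mem_iUnion.mpr ⟨g, h⟩)
  -- reduce to partitions
  simp only [slowEntropyRel]
  refine iSup_le fun r => iSup_le fun P => iSup_le fun hP => ?_
  have hP' : Measurable (P ∘ ρ) := hP.comp hρF.meas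
  refine le_trans ?_ (le_iSup_of_le r (le_iSup_of_le (P ∘ ρ) (le_iSup_of_le hP' le_rfl)))
  simp only [slowEntropyPartRel]
  refine iSup_le fun ε => iSup_le fun hε => ?_
  rw [Set.mem_Ioi] at hε
  by_cases h1 : 1 ≤ ε
  · have hzero : ∀ n, hamCovRel T μy ν P (F n) ε = 0 := by
      intro n
      refine Nat.le_zero.mp (Nat.sInf_le ⟨∅, MeasurableSet.empty, ?_,
        fun y hy => absurd hy (Set.notMem_empty y)⟩)
      rw [measure_empty, ENNReal.ofReal_eq_zero.mpr (by linarith)]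
    have hfun : (fun n => ENNReal.ofReal ((hamCovRel T μy ν P (F n) ε : ℝ) / U (F n).card))
        = fun _ => (0 : ℝ≥0∞) := by
      funext n
      rw [hzero n]
      simp
    rw [hfun, limsup_const]
    exact zero_le
  · push_neg at h1
    have hε'pos : (0:ℝ) < ε ^ 2 / 4 := by positivity
    have hkey : ∀ n, hamCovRel T μy ν P (F n) ε
        ≤ hamCovRel T' μy' ν' (P ∘ ρ) (F n) (ε ^ 2 / 4) := fun n =>
      key_cov_le hπ.meas hπ'.meas (fun y => measurableSet_singleton y)
        (fun y => measurableSet_singleton y) hφbarF.meas hφbarF.map hφbarF.equiv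
        hρF.meas hφ.meas hφ.map hcomm hX'.meas hdis hdis' hNmeas hNnull hN hP (F n)
        hε h1.le rfl
    have hls : Filter.limsup
        (fun n => ENNReal.ofReal ((hamCovRel T μy ν P (F n) ε : ℝ) / U (F n).card)) atTop
        ≤ Filter.limsup (fun n => ENNReal.ofReal
          ((hamCovRel T' μy' ν' (P ∘ ρ) (F n) (ε ^ 2 / 4) : ℝ) / U (F n).card)) atTop :=
      Filter.limsup_le_limsup (Filter.Eventually.of_forall fun n =>
        ENNReal.ofReal_le_ofReal ((div_le_div_iff_of_pos_right (hU.1 _)).mpr (Nat.cast_le.mpr (hkey n))))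
    exact le_trans hls (le_iSup₂_of_le (ε ^ 2 / 4) (Set.mem_Ioi.mpr hε'pos) le_rfl)
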